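/- If every action of a group G by isometries on a metric space has only bounded orbits, then G has the Bergman property: for every generating set S of G there exists n with G = (S ∪ S⁻¹ ∪ {1})ⁿ. -/

import Mathlib

open Pointwise

/-- If every isometric action of a group `G` on a metric space has only bounded orbits,
then `G` has the Bergman property. -/
theorem stmt_8 {G : Type u} [Group G]
    (hbd : ∀ (X : Type u) [MetricSpace X] [MulAction G X],
      (∀ g : G, Isometry (fun x : X => g • x)) →
      ∀ x : X, Bornology.IsBounded (MulAction.orbit G x)) :
    ∀ S : Set G, Subgroup.closure S = ⊤ →
      ∃ n : ℕ, (S ∪ S⁻¹ ∪ {1}) ^ n = Set.univ := by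
  intro S hS
  classical
  set T : Set G := S ∪ S⁻¹ ∪ {1} with hT
  have hTinv : T⁻¹ = T := by
    simp only [hT, Set.union_inv, Set.inv_singleton, inv_one, inv_inv]
    rw [Set.union_comm S⁻¹ S]
  have h1T : (1 : G) ∈ T := by simp [hT]
  have hEx : ∀ g : G, ∃ n : ℕ, g ∈ T ^ n := by
    intro g
    have hg : g ∈ Subgroup.closure S := by rw [hS]; trivial
    induction hg using Subgroup.closure_induction with
    | mem x hx => exact ⟨1, by rw [pow_one]; exact Set.mem_union_left _ (Set.mem_union_left _ hx)⟩
    | one => exact ⟨0, by simp⟩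
    | mul a b _ _ ha hb =>
      obtain ⟨m, hm⟩ := ha; obtain ⟨n, hn⟩ := hb
      exact ⟨m + n, by rw [pow_add]; exact Set.mul_mem_mul hm hn⟩
    | inv a _ ha =>
      obtain ⟨n, hn⟩ := ha
      refine ⟨n, ?_⟩
      rw [← hTinv, inv_pow]
      exact Set.inv_mem_inv.mpr hn
  let ℓ : G → ℕ := fun g => Nat.find (hEx g)
  have hℓ_spec : ∀ g : G, g ∈ T ^ ℓ g := fun g => Nat.find_spec (hEx g)
  have hℓ_le : ∀ (g : G) (n : ℕ), g ∈ T ^ n → ℓ g ≤ n := fun g n h => Nat.find_le h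
  have hℓ_one : ℓ (1 : G) = 0 := Nat.le_zero.mp (hℓ_le 1 0 (by simp))
  have hℓ_inv : ∀ g : G, ℓ g⁻¹ ≤ ℓ g := by
    intro g
    refine hℓ_le _ _ ?_
    rw [← hTinv, inv_pow]
    exact Set.inv_mem_inv.mpr (hℓ_spec g)
  have hℓ_inv' : ∀ g : G, ℓ g⁻¹ = ℓ g := fun g =>
    le_antisymm (hℓ_inv g) (by simpa using hℓ_inv g⁻¹)
  have hℓ_mul : ∀ g h : G, ℓ (g * h) ≤ ℓ g + ℓ h := by
    intro g h
    refine hℓ_le _ _ ?_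
    rw [pow_add]
    exact Set.mul_mem_mul (hℓ_spec g) (hℓ_spec h)
  have hℓ_eq_one : ∀ g : G, ℓ g = 0 → g = 1 := by
    intro g hg
    have := hℓ_spec g
    rw [hg, pow_zero] at this
    simpa using this
  let m : MetricSpace G :=
    { dist := fun g h => (ℓ (g⁻¹ * h) : ℝ)
      dist_self := fun g => by simp [hℓ_one]
      dist_comm := fun g h => by
        show ((ℓ (g⁻¹ * h) : ℝ)) = ((ℓ (h⁻¹ * g) : ℝ))
        have e : (g⁻¹ * h)⁻¹ = h⁻¹ * g := by group
        rw [← hℓ_inv' (g⁻¹ * h), e]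
      dist_triangle := fun x y z => by
        show ((ℓ (x⁻¹ * z) : ℝ)) ≤ ((ℓ (x⁻¹ * y) : ℝ)) + ((ℓ (y⁻¹ * z) : ℝ))
        have h1 : x⁻¹ * z = (x⁻¹ * y) * (y⁻¹ * z) := by group
        have := hℓ_mul (x⁻¹ * y) (y⁻¹ * z)
        rw [← h1] at this
        exact_mod_cast this
      eq_of_dist_eq_zero := fun {x y} h => by
        have h' : ((ℓ (x⁻¹ * y) : ℝ)) = 0 := h
        have : ℓ (x⁻¹ * y) = 0 := by exact_mod_cast h'
        have := hℓ_eq_one _ this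
        exact (eq_of_inv_mul_eq_one this) }
  have hiso : ∀ g : G, Isometry (fun x : G => g • x) := by
    intro g
    refine Isometry.of_dist_eq fun x y => ?_
    show ((ℓ ((g • x)⁻¹ * (g • y)) : ℝ)) = ((ℓ (x⁻¹ * y) : ℝ))
    have e : (g • x)⁻¹ * (g • y) = x⁻¹ * y := by
      show (g * x)⁻¹ * (g * y) = x⁻¹ * y
      group
    rw [e]
  have hb := hbd G hiso (1 : G)
  have horb : MulAction.orbit G (1 : G) = Set.univ := by
    ext g; simp [MulAction.mem_orbit_iff]
  rw [horb] at hb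
  rw [Metric.isBounded_iff] at hb
  obtain ⟨C, hC⟩ := hb
  refine ⟨⌊C⌋₊, ?_⟩
  ext g
  simp only [Set.mem_univ, iff_true]
  have hd : dist (1 : G) g ≤ C := hC trivial trivial
  have : (ℓ g : ℝ) ≤ C := by
    have : dist (1 : G) g = (ℓ g : ℝ) := by
      show ((ℓ ((1 : G)⁻¹ * g) : ℝ)) = _
      rw [inv_one, one_mul]
    rwa [this] at hd
  have hle : ℓ g ≤ ⌊C⌋₊ := Nat.le_floor this
  exact Set.pow_subset_pow_right h1T hle (hℓ_spec g)
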